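/- For all natural numbers n and m, consider pairs (f₁, f₂) where f₁ : Fin (n+m+1) → Fin (n+1) and f₂ : Fin (n+m+1) → Fin (m+1) are monotone maps such that the map i ↦ (f₁ i, f₂ i) is injective. The assignment sending such a pair to the set { i ∈ Fin (n+m) : f₁(i+1) = f₁(i) + 1 } is a bijection from the set of such pairs to the set of subsets of Fin (n+m) of cardinality n. (Equivalently: the nondegenerate (n+m)-simplices of the product of standard simplices Δ[n] × Δ[m] correspond bijectively to (n,m)-shuffles.) -/

import Mathlib

/-!
STATEMENT 14: the nondegenerate `(n+m)`-simplices of `Δ[n] × Δ[m]`, i.e. pairs of monotone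
maps `f₁ : Fin (n+m+1) → Fin (n+1)`, `f₂ : Fin (n+m+1) → Fin (m+1)` with
`i ↦ (f₁ i, f₂ i)` injective, correspond bijectively (via the set of positions at which the
first coordinate increases) to the subsets of `Fin (n+m)` of cardinality `n`, i.e. to
`(n,m)`-shuffles.
-/

open Finset

namespace Shuffle14

variable {N : ℕ}

def cnt (s : Finset (Fin N)) (k : ℕ) : ℕ :=
  (s.filter fun j : Fin N => (j : ℕ) < k).card

lemma cnt_zero (s : Finset (Fin N)) : cnt s 0 = 0 := by simp [cnt]

lemma cnt_succ (s : Finset (Fin N)) (i : Fin N) :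
    cnt s ((i : ℕ) + 1) = cnt s (i : ℕ) + (if i ∈ s then 1 else 0) := by
  classical
  unfold cnt
  have h : (s.filter fun j : Fin N => (j : ℕ) < (i : ℕ) + 1)
      = (s.filter fun j : Fin N => (j : ℕ) < (i : ℕ)) ∪ (s.filter fun j : Fin N => j = i) := by
    rw [← filter_or]
    exact filter_congr fun j hj => by
      simp [Nat.lt_succ_iff_lt_or_eq, Fin.ext_iff]
      rw [Fin.le_iff_val_le_val, Fin.lt_iff_val_lt_val]
      omega
  rw [h, card_union_of_disjoint, filter_eq']
  · split <;> simp
  · simp only [disjoint_left, mem_filter]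
    rintro j ⟨hjs, hjlt⟩ ⟨-, rfl⟩
    omega

lemma cnt_of_ge (s : Finset (Fin N)) (k : ℕ) (h : N ≤ k) : cnt s k = s.card := by
  unfold cnt
  rw [filter_true_of_mem]
  intro j _
  have := j.isLt
  omega

lemma cnt_le_card (s : Finset (Fin N)) (k : ℕ) : cnt s k ≤ s.card :=
  card_le_card (filter_subset _ _)

lemma cnt_mono (s : Finset (Fin N)) {k l : ℕ} (h : k ≤ l) : cnt s k ≤ cnt s l := by
  apply card_le_card
  intro j hj
  simp only [mem_filter] at hj ⊢
  exact ⟨hj.1, by omega⟩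

lemma cnt_univ : ∀ k : ℕ, k ≤ N → cnt (univ : Finset (Fin N)) k = k := by
  intro k
  induction k with
  | zero => intro _; exact cnt_zero _
  | succ k ih =>
    intro hk
    have hkN : k < N := by omega
    have h := cnt_succ (univ : Finset (Fin N)) ⟨k, hkN⟩
    simp only [Fin.val_mk, mem_univ, if_true] at h
    rw [h, ih (by omega)]

lemma cnt_add_compl (s : Finset (Fin N)) (k : ℕ) (hk : k ≤ N) :
    cnt s k + cnt sᶜ k = k := by
  classical
  have h : cnt s k + cnt sᶜ k = cnt (univ : Finset (Fin N)) k := by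
    unfold cnt
    rw [← card_union_of_disjoint (disjoint_filter_filter disjoint_compl_right),
      ← filter_union, union_compl]
  rw [h, cnt_univ k hk]

lemma cnt_le_self (s : Finset (Fin N)) (k : ℕ) (hk : k ≤ N) : cnt s k ≤ k := by
  have := cnt_add_compl s k hk
  omega

variable {n m : ℕ}

lemma step_lemma (f₁ : Fin (n+m+1) →o Fin (n+1)) (f₂ : Fin (n+m+1) →o Fin (m+1))
    (hinj : Function.Injective fun i => (f₁ i, f₂ i)) (j : Fin (n+m)) :
    (f₁ j.castSucc : ℕ) + (f₂ j.castSucc : ℕ) + 1 ≤ (f₁ j.succ : ℕ) + (f₂ j.succ : ℕ) := by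
  have h1 : (f₁ j.castSucc : ℕ) ≤ (f₁ j.succ : ℕ) := f₁.monotone (Fin.castSucc_le_succ j)
  have h2 : (f₂ j.castSucc : ℕ) ≤ (f₂ j.succ : ℕ) := f₂.monotone (Fin.castSucc_le_succ j)
  have hne : ¬ ((f₁ j.castSucc : ℕ) = (f₁ j.succ : ℕ) ∧ (f₂ j.castSucc : ℕ) = (f₂ j.succ : ℕ)) := by
    rintro ⟨e1, e2⟩
    have h : (fun i => (f₁ i, f₂ i)) j.castSucc = (fun i => (f₁ i, f₂ i)) j.succ := by
      show (f₁ j.castSucc, f₂ j.castSucc) = (f₁ j.succ, f₂ j.succ)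
      exact Prod.ext (Fin.ext e1) (Fin.ext e2)
    exact absurd (hinj h) (Fin.castSucc_lt_succ : j.castSucc < j.succ).ne
  omega

lemma sum_eq (f₁ : Fin (n+m+1) →o Fin (n+1)) (f₂ : Fin (n+m+1) →o Fin (m+1))
    (hinj : Function.Injective fun i => (f₁ i, f₂ i)) :
    ∀ i : Fin (n+m+1), (f₁ i : ℕ) + (f₂ i : ℕ) = (i : ℕ) := by
  have lb : ∀ i : Fin (n+m+1), (i : ℕ) ≤ (f₁ i : ℕ) + (f₂ i : ℕ) := by
    intro i
    induction i using Fin.induction with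
    | zero => simp
    | succ j ih =>
      have hs := step_lemma f₁ f₂ hinj j
      rw [Fin.val_succ]
      rw [Fin.coe_castSucc] at ih
      omega
  have ub : ∀ i : Fin (n+m+1), (f₁ i : ℕ) + (f₂ i : ℕ) ≤ (i : ℕ) := by
    intro i
    induction i using Fin.reverseInduction with
    | last =>
      have h1 := (f₁ (Fin.last (n+m))).isLt
      have h2 := (f₂ (Fin.last (n+m))).isLt
      rw [Fin.val_last]
      omega
    | cast j ih =>
      have hs := step_lemma f₁ f₂ hinj j
      rw [Fin.val_succ] at ih
      rw [Fin.coe_castSucc]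
      omega
  exact fun i => le_antisymm (ub i) (lb i)

def shuf (f₁ : Fin (n+m+1) →o Fin (n+1)) : Finset (Fin (n+m)) :=
  Finset.univ.filter fun i : Fin (n+m) => ((f₁ i.succ : ℕ) = (f₁ i.castSucc : ℕ) + 1)

lemma f1_step (f₁ : Fin (n+m+1) →o Fin (n+1)) (f₂ : Fin (n+m+1) →o Fin (m+1))
    (hinj : Function.Injective fun i => (f₁ i, f₂ i)) (j : Fin (n+m)) :
    (f₁ j.succ : ℕ) = (f₁ j.castSucc : ℕ) + 1 ∨ (f₁ j.succ : ℕ) = (f₁ j.castSucc : ℕ) := by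
  have h1 : (f₁ j.castSucc : ℕ) ≤ (f₁ j.succ : ℕ) := f₁.monotone (Fin.castSucc_le_succ j)
  have h2 : (f₂ j.castSucc : ℕ) ≤ (f₂ j.succ : ℕ) := f₂.monotone (Fin.castSucc_le_succ j)
  have e1 := sum_eq f₁ f₂ hinj j.succ
  have e2 := sum_eq f₁ f₂ hinj j.castSucc
  rw [Fin.val_succ] at e1
  rw [Fin.coe_castSucc] at e2
  omega

lemma f1_eq_cnt (f₁ : Fin (n+m+1) →o Fin (n+1)) (f₂ : Fin (n+m+1) →o Fin (m+1))
    (hinj : Function.Injective fun i => (f₁ i, f₂ i)) :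
    ∀ i : Fin (n+m+1), (f₁ i : ℕ) = cnt (shuf f₁) (i : ℕ) := by
  intro i
  induction i using Fin.induction with
  | zero =>
    have h0 := sum_eq f₁ f₂ hinj 0
    simp only [Fin.val_zero] at h0 ⊢
    rw [cnt_zero]
    omega
  | succ j ih =>
    have hmem : j ∈ shuf f₁ ↔ (f₁ j.succ : ℕ) = (f₁ j.castSucc : ℕ) + 1 := by
      simp [shuf]
    have hc := cnt_succ (shuf f₁) j
    have hstep := f1_step f₁ f₂ hinj j
    rw [Fin.val_succ, hc]
    rw [Fin.coe_castSucc] at ih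
    by_cases hj : j ∈ shuf f₁
    · rw [if_pos hj]
      rw [hmem] at hj
      omega
    · rw [if_neg hj]
      rw [hmem] at hj
      rcases hstep with h | h
      · exact absurd h hj
      · omega

lemma shuf_card (f₁ : Fin (n+m+1) →o Fin (n+1)) (f₂ : Fin (n+m+1) →o Fin (m+1))
    (hinj : Function.Injective fun i => (f₁ i, f₂ i)) : (shuf f₁).card = n := by
  have h1 := f1_eq_cnt f₁ f₂ hinj (Fin.last (n+m))
  have h2 := sum_eq f₁ f₂ hinj (Fin.last (n+m))
  have h3 := (f₂ (Fin.last (n+m))).isLt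
  have h4 := (f₁ (Fin.last (n+m))).isLt
  rw [Fin.val_last] at h1 h2
  rw [cnt_of_ge _ _ le_rfl] at h1
  omega

end Shuffle14

open Shuffle14 in
theorem nondegenerate_simplices_equiv_shuffles (n m : ℕ) :
    Set.BijOn
      (fun p : {q : (Fin (n + m + 1) →o Fin (n + 1)) × (Fin (n + m + 1) →o Fin (m + 1)) //
          Function.Injective fun i => (q.1 i, q.2 i)} =>
        Finset.univ.filter fun i : Fin (n + m) =>
          ((p.1.1 i.succ : ℕ) = (p.1.1 i.castSucc : ℕ) + 1))
      Set.univ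
      {s : Finset (Fin (n + m)) | s.card = n} := by
  classical
  refine ⟨?_, ?_, ?_⟩
  · -- MapsTo
    rintro ⟨⟨f₁, f₂⟩, hinj⟩ -
    show (shuf f₁).card = n
    exact shuf_card f₁ f₂ hinj
  · -- InjOn
    rintro ⟨⟨f₁, f₂⟩, hinj⟩ - ⟨⟨g₁, g₂⟩, hinj'⟩ - h
    have hsh : shuf f₁ = shuf g₁ := h
    have hf : ∀ i, f₁ i = g₁ i := by
      intro i
      have e1 := f1_eq_cnt f₁ f₂ hinj i
      have e2 := f1_eq_cnt g₁ g₂ hinj' i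
      rw [hsh] at e1
      exact Fin.ext (e1.trans e2.symm)
    have hg : ∀ i, f₂ i = g₂ i := by
      intro i
      have e1 := sum_eq f₁ f₂ hinj i
      have e2 := sum_eq g₁ g₂ hinj' i
      have e3 := hf i
      rw [Fin.ext_iff] at e3 ⊢
      omega
    apply Subtype.ext
    exact Prod.ext (OrderHom.ext _ _ (funext hf)) (OrderHom.ext _ _ (funext hg))
  · -- SurjOn
    rintro s hs
    simp only [Set.mem_setOf_eq] at hs
    have hNcard : (n + m) - s.card = sᶜ.card := by
      rw [card_compl, Fintype.card_fin]
    have hcle : ∀ k : ℕ, cnt s k ≤ n := fun k => le_trans (cnt_le_card s k) (le_of_eq hs)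
    have hsub : ∀ i : Fin (n + m + 1), (i : ℕ) - cnt s (i : ℕ) ≤ m := by
      intro i
      have h1 := cnt_add_compl s (i : ℕ) (by omega)
      have h2 := cnt_le_card sᶜ (i : ℕ)
      omega
    refine ⟨⟨⟨⟨fun i => ⟨cnt s (i : ℕ), by have := hcle (i : ℕ); omega⟩, ?_⟩,
             ⟨fun i => ⟨(i : ℕ) - cnt s (i : ℕ), by have := hsub i; omega⟩, ?_⟩⟩, ?_⟩,
           Set.mem_univ _, ?_⟩
    · -- monotone f₁
      intro a b hab
      show cnt s (a : ℕ) ≤ cnt s (b : ℕ)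
      exact cnt_mono s hab
    · -- monotone f₂
      intro a b hab
      show (a : ℕ) - cnt s (a : ℕ) ≤ (b : ℕ) - cnt s (b : ℕ)
      have hab' : (a : ℕ) ≤ (b : ℕ) := hab
      have h1 := cnt_add_compl s (a : ℕ) (by omega)
      have h2 := cnt_add_compl s (b : ℕ) (by omega)
      have h3 : cnt sᶜ (a : ℕ) ≤ cnt sᶜ (b : ℕ) := cnt_mono sᶜ hab'
      omega
    · -- injectivity
      intro a b hab
      have h1 : cnt s (a : ℕ) = cnt s (b : ℕ) := congrArg (fun x => ((x.1 : Fin (n + 1)) : ℕ)) hab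
      have h2 : (a : ℕ) - cnt s (a : ℕ) = (b : ℕ) - cnt s (b : ℕ) :=
        congrArg (fun x => ((x.2 : Fin (m + 1)) : ℕ)) hab
      have h3 := cnt_le_self s (a : ℕ) (by omega)
      have h4 := cnt_le_self s (b : ℕ) (by omega)
      apply Fin.ext
      omega
    · -- image is s
      ext i
      simp only [mem_filter, mem_univ, true_and, OrderHom.coe_mk]
      have hc := cnt_succ s i
      show cnt s ((i.succ : Fin (n + m + 1)) : ℕ) = cnt s ((i.castSucc : Fin (n + m + 1)) : ℕ) + 1 ↔ i ∈ s
      rw [Fin.val_succ, Fin.coe_castSucc]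
      constructor
      · intro h
        by_contra hi
        rw [if_neg hi] at hc
        omega
      · intro hi
        rw [if_pos hi] at hc
        omega
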